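/- Let λ > 0, L ≥ λ and C' ≥ 1/λ. Define the sequence (γ_k)_{k≥0} recursively by γ_0 = 1/L and γ_k = min{ γ_{k−1}, max{ C'/k, γ_{k−1}/(1 + λ) } } for k ≥ 1. Then there exists a finite constant M such that for all K ≥ 1, A_K := ∑_{k=0}^{K−1} γ_k · ∏_{l=k+1}^{K−1} (1 − λγ_l) ≤ M; in fact one may take M = M' + C' where M' = ∑_{k=0}^{N} γ_k and N is an index such that γ_k = C'/k for all k > N. -/

import Mathlib

private lemma telescope_prod (k : ℕ) (hk : 1 ≤ k) (K : ℕ) (hK : k + 1 ≤ K) :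
    ∏ l ∈ Finset.Ico (k+1) K, (((l:ℝ)-1)/l) = (k:ℝ) / ((K:ℝ)-1) := by
  induction K, hK using Nat.le_induction with
  | base =>
    simp only [Finset.Ico_self, Finset.prod_empty]
    have : ((k:ℝ)+1) - 1 = (k:ℝ) := by ring
    push_cast
    rw [this, div_self]
    exact_mod_cast Nat.pos_of_ne_zero (by omega) |>.ne'
  | succ K hK ih =>
    rw [Finset.prod_Ico_succ_top hK, ih]
    have h1 : (1:ℝ) ≤ (k:ℝ) := by exact_mod_cast hk
    have h2 : (k:ℝ) + 1 ≤ (K:ℝ) := by exact_mod_cast hK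
    have hK1 : ((K:ℝ)) - 1 ≠ 0 := by linarith
    have hK0 : (K:ℝ) ≠ 0 := by linarith
    push_cast
    field_simp
    rw [add_sub_cancel_right, div_self hK0]

set_option maxHeartbeats 1000000 in
/-- The explicit step-size rule γ₀ = 1/L, γ_k = min{γ_{k-1}, max{C'/k, γ_{k-1}/(1+λ)}}
satisfies the partial-sum boundedness condition A_K ≤ M = M' + C' with
M' = ∑_{k=0}^{N} γ_k, where N is such that γ_k = C'/k for all k > N
(Remark 3.16 of the paper). -/
theorem stepsize_rule_partial_sums_bounded
    (lam L C' : ℝ) (hlam : 0 < lam) (hL : lam ≤ L) (hC' : 1 / lam ≤ C')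
    (γ : ℕ → ℝ) (hγ0 : γ 0 = 1 / L)
    (hγ : ∀ k : ℕ, γ (k + 1)
      = min (γ k) (max (C' / (k + 1 : ℕ)) (γ k / (1 + lam)))) :
    ∃ N : ℕ, (∀ k : ℕ, N < k → γ k = C' / k) ∧
      ∀ K : ℕ, 1 ≤ K →
        ∑ k ∈ Finset.range K, γ k * ∏ l ∈ Finset.Ico (k + 1) K, (1 - lam * γ l)
          ≤ (∑ k ∈ Finset.range (N + 1), γ k) + C' := by
  have hLpos : 0 < L := lt_of_lt_of_le hlam hL
  have hC'pos : 0 < C' := lt_of_lt_of_le (by positivity) hC'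
  have h1lam : (0:ℝ) < 1 + lam := by linarith
  have hlamC' : 1 ≤ lam * C' := by
    rw [div_le_iff₀ hlam] at hC'; linarith
  -- positivity
  have hγpos : ∀ k, 0 < γ k := by
    intro k; induction k with
    | zero => rw [hγ0]; positivity
    | succ k ih =>
      rw [hγ k]
      exact lt_min ih (lt_of_lt_of_le (by positivity) (le_max_right _ _))
  -- monotone
  have hmono : ∀ k, γ (k+1) ≤ γ k := fun k => (hγ k) ▸ min_le_left _ _
  have hanti : ∀ j k, j ≤ k → γ k ≤ γ j := fun j k h =>
    (antitone_nat_of_succ_le hmono) h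
  have hγtop : ∀ k, lam * γ k ≤ 1 := by
    intro k
    have h1 : γ k ≤ 1 / L := hγ0 ▸ hanti 0 k (Nat.zero_le k)
    have h2 : (1:ℝ)/L ≤ 1/lam := one_div_le_one_div_of_le hlam hL
    calc lam * γ k ≤ lam * (1/lam) := by nlinarith
    _ = 1 := by field_simp
  -- recursion case lemmas
  have hrec1 : ∀ k : ℕ, γ k ≤ C' / ((k:ℝ)+1) → γ (k+1) = γ k := by
    intro k h
    rw [hγ k]
    push_cast
    exact min_eq_left (le_trans h (le_max_left _ _))
  have hrec2 : ∀ k : ℕ, C' / ((k:ℝ)+1) < γ k →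
      γ (k+1) = max (C' / ((k:ℝ)+1)) (γ k / (1 + lam)) := by
    intro k h
    rw [hγ k]
    push_cast
    exact min_eq_right (max_le h.le (by
      rw [div_le_iff₀ h1lam]; nlinarith [hγpos k]))
  -- key step: if m*lam ≥ 1 and γ m ≤ C'/m then invariant & equality trigger
  have stepP : ∀ m : ℕ, 1 ≤ (m:ℝ) * lam → γ m ≤ C' / (m:ℝ) →
      γ (m+1) ≤ C' / ((m:ℝ)+1) ∧
      (C' / ((m:ℝ)+1) < γ m → γ (m+1) = C' / ((m:ℝ)+1)) := by
    intro m hm hγm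
    have hmpos : (0:ℝ) < m := by nlinarith
    by_cases h : γ m ≤ C' / ((m:ℝ)+1)
    · exact ⟨(hrec1 m h) ▸ h, fun hc => absurd h (not_le.mpr hc)⟩
    · push_neg at h
      have h2 : γ m * m ≤ C' := by rwa [le_div_iff₀ hmpos] at hγm
      have hb : γ m / (1 + lam) ≤ C' / ((m:ℝ)+1) := by
        rw [div_le_div_iff₀ h1lam (by linarith : (0:ℝ) < (m:ℝ)+1)]
        nlinarith [hγpos m, mul_nonneg (hγpos m).le (sub_nonneg.mpr hm)]
      have := hrec2 m h
      rw [this, max_eq_left hb]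
      exact ⟨le_refl _, fun _ => rfl⟩
  -- choose K₀ with K₀ ≥ 1 and K₀*lam ≥ 1
  obtain ⟨K₀', hK₀'⟩ := exists_nat_ge (1/lam)
  set K₀ : ℕ := max K₀' 1 with hK₀def
  have hK₀lam : ∀ m : ℕ, K₀ ≤ m → 1 ≤ (m:ℝ) * lam := by
    intro m hm
    have h1 : (K₀':ℝ) ≤ m := by
      exact_mod_cast le_trans (le_max_left K₀' 1) hm
    have : 1/lam ≤ (m:ℝ) := le_trans hK₀' h1
    rw [div_le_iff₀ hlam] at this; linarith
  have hK₀1 : 1 ≤ K₀ := le_max_right _ _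
  -- Step A : ∃ n ≥ K₀ with γ n ≤ C'/n
  have stepA : ∃ n : ℕ, K₀ ≤ n ∧ γ n ≤ C' / (n:ℝ) := by
    by_contra hno
    push_neg at hno
    -- geometric decay
    have geo : ∀ j : ℕ, γ (K₀ + j) ≤ γ K₀ / (1+lam)^j := by
      intro j; induction j with
      | zero => simp
      | succ j ih =>
        have hub : γ (K₀ + j + 1) ≤ max (C' / ((K₀+j:ℕ)+1:ℕ)) (γ (K₀+j) / (1+lam)) := by
          rw [hγ (K₀ + j)]; exact min_le_right _ _
        rcases le_max_iff.mp hub with h | h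
        · exfalso
          have hlt := hno (K₀+j+1) (by omega)
          push_cast at h hlt
          linarith
        · calc γ (K₀ + (j+1)) = γ (K₀ + j + 1) := by ring_nf
            _ ≤ γ (K₀+j) / (1+lam) := h
            _ ≤ (γ K₀ / (1+lam)^j) / (1+lam) :=
                div_le_div_of_nonneg_right ih h1lam.le
            _ = γ K₀ / (1+lam)^(j+1) := by rw [div_div, pow_succ]
    -- derive contradiction
    have key : ∀ t : ℕ, C' * (1 + t*lam)^2 ≤ γ K₀ * ((K₀:ℝ) + 2*t) := by
      intro t
      have h1 : γ (K₀ + 2*t) ≤ γ K₀ / (1+lam)^(2*t) := geo (2*t)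
      have h2 : C' / ((K₀ + 2*t : ℕ):ℝ) < γ (K₀ + 2*t) := hno _ (by omega)
      have hpowpos : (0:ℝ) < (1+lam)^(2*t) := by positivity
      have hnpos : (0:ℝ) < ((K₀ + 2*t : ℕ):ℝ) := by
        have : 1 ≤ K₀ + 2*t := by omega
        exact_mod_cast Nat.lt_of_lt_of_le Nat.zero_lt_one this
      have h1' : γ (K₀ + 2*t) * (1+lam)^(2*t) ≤ γ K₀ := (le_div_iff₀ hpowpos).mp h1
      have h2' : C' < γ (K₀ + 2*t) * ((K₀ + 2*t : ℕ):ℝ) := (div_lt_iff₀ hnpos).mp h2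
      have h3 : C' * (1+lam)^(2*t) < γ K₀ * ((K₀ + 2*t : ℕ):ℝ) := by
        nlinarith [mul_lt_mul_of_pos_right h2' hpowpos,
          mul_le_mul_of_nonneg_right h1' hnpos.le]
      have h4 : 1 + (t:ℝ)*lam ≤ (1+lam)^t := by
        have := one_add_mul_le_pow (by linarith : (-2:ℝ) ≤ lam) t
        linarith
      have h5 : (1 + (t:ℝ)*lam)^2 ≤ (1+lam)^(2*t) := by
        rw [two_mul, pow_add]
        have hpos : (0:ℝ) ≤ 1 + (t:ℝ)*lam := by positivity
        nlinarith [h4]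
      have h6 : C' * (1 + (t:ℝ)*lam)^2 ≤ C' * (1+lam)^(2*t) :=
        mul_le_mul_of_nonneg_left h5 hC'pos.le
      calc C' * (1 + (t:ℝ)*lam)^2 ≤ C' * (1+lam)^(2*t) := h6
        _ ≤ γ K₀ * ((K₀ + 2*t : ℕ):ℝ) := h3.le
        _ = γ K₀ * ((K₀:ℝ) + 2*t) := by push_cast; ring
    -- pick large t
    obtain ⟨t, ht⟩ := exists_nat_gt (max ((γ K₀ * K₀ + 2*γ K₀)/(C'*lam^2)) 1)
    have ht1 : (1:ℝ) ≤ t := le_of_lt (lt_of_le_of_lt (le_max_right _ _) ht)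
    have ht2 : (γ K₀ * K₀ + 2*γ K₀) < t * (C'*lam^2) := by
      have := lt_of_le_of_lt (le_max_left _ _) ht
      rwa [div_lt_iff₀ (by positivity)] at this
    have hK₀r : (0:ℝ) ≤ (K₀:ℝ) := Nat.cast_nonneg _
    nlinarith [key t, hγpos K₀, hC'pos.le,
      mul_le_mul_of_nonneg_left ht2.le (le_trans zero_le_one ht1),
      mul_nonneg (mul_nonneg (sub_nonneg.mpr ht1) (hγpos K₀).le) hK₀r,
      mul_nonneg (mul_nonneg hC'pos.le (le_trans zero_le_one ht1)) hlam.le,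
      sq_nonneg ((t:ℝ)*lam)]
  obtain ⟨n, hnK₀, hn⟩ := stepA
  -- Step B : invariant γ m ≤ C'/m for m ≥ n
  have stepB : ∀ m : ℕ, n ≤ m → γ m ≤ C' / (m:ℝ) := by
    intro m hm
    induction m, hm using Nat.le_induction with
    | base => exact hn
    | succ m hm ih =>
      have h := (stepP m (hK₀lam m (le_trans hnK₀ hm)) ih).1
      push_cast
      exact h
  -- Step C : find m ≥ n where the equality triggers
  have stepC : ∃ m : ℕ, n ≤ m ∧ C' / ((m:ℝ)+1) < γ m := by
    by_contra hnone
    push_neg at hnone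
    have hconst : ∀ j : ℕ, γ (n + j) = γ n := by
      intro j; induction j with
      | zero => rfl
      | succ j ih =>
        rw [show n+(j+1) = (n+j)+1 from rfl,
          hrec1 (n+j) (by have := hnone (n+j) (Nat.le_add_right _ _); push_cast at this ⊢; exact this), ih]
    obtain ⟨j, hj⟩ := exists_nat_gt (C' / γ n)
    have h1 : γ n ≤ C' / (((n+j:ℕ):ℝ)+1) := by
      rw [← hconst j]; exact hnone (n+j) (Nat.le_add_right _ _)
    have h2 : γ n * (((n+j:ℕ):ℝ)+1) ≤ C' := by
      rw [← le_div_iff₀ (by positivity : (0:ℝ) < ((n+j:ℕ):ℝ)+1)]; exact h1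
    have h3 : C' < γ n * j := by
      rw [div_lt_iff₀ (hγpos n)] at hj; linarith [mul_comm (γ n) (j:ℝ)]
    have h4 : (j:ℝ) ≤ ((n+j:ℕ):ℝ)+1 := by push_cast; linarith [Nat.cast_nonneg (α := ℝ) n]
    nlinarith [hγpos n]
  obtain ⟨m, hnm, hm⟩ := stepC
  have hmK₀ : K₀ ≤ m := le_trans hnK₀ hnm
  have hm1 : 1 ≤ m := le_trans hK₀1 hmK₀
  have heq : γ (m+1) = C' / ((m:ℝ)+1) :=
    (stepP m (hK₀lam m hmK₀) (stepB m hnm)).2 hm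
  -- Step D : propagation of the equality
  have hprop : ∀ k : ℕ, m < k → γ k = C' / (k:ℝ) := by
    intro k hk
    induction k, hk using Nat.le_induction with
    | base => rw [heq]; push_cast; ring_nf
    | succ k hk ih =>
      have hkK₀ : K₀ ≤ k := by omega
      have hkpos : (0:ℝ) < k := by
        have : 1 ≤ k := by omega
        exact_mod_cast this.trans_lt' Nat.zero_lt_one
      have hlt : C' / ((k:ℝ)+1) < γ k := by
        rw [ih]
        exact div_lt_div_of_pos_left hC'pos hkpos (by linarith)
      have := (stepP k (hK₀lam k hkK₀) ih.le).2 hlt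
      rw [this]; push_cast; ring_nf
  -- Step E : the partial-sum bound, with N := m
  refine ⟨m, hprop, ?_⟩
  intro K hK
  have hfac0 : ∀ l, 0 ≤ 1 - lam * γ l := fun l => by linarith [hγtop l]
  have hfac1 : ∀ l, 1 - lam * γ l ≤ 1 := fun l => by nlinarith [hγpos l, hlam]
  have hprod01 : ∀ a b : ℕ, (∏ l ∈ Finset.Ico a b, (1 - lam * γ l)) ≤ 1 :=
    fun a b => Finset.prod_le_one (fun i _ => hfac0 i) (fun i _ => hfac1 i)
  have hterm : ∀ k : ℕ, γ k * (∏ l ∈ Finset.Ico (k+1) K, (1 - lam * γ l)) ≤ γ k := by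
    intro k
    have := mul_le_mul_of_nonneg_left (hprod01 (k+1) K) (hγpos k).le
    simpa using this
  have hpart1 : ∀ K' : ℕ, K' ≤ m + 1 →
      ∑ k ∈ Finset.range K', γ k * ∏ l ∈ Finset.Ico (k+1) K, (1 - lam * γ l)
        ≤ ∑ k ∈ Finset.range (m+1), γ k := by
    intro K' hK'
    calc ∑ k ∈ Finset.range K', γ k * ∏ l ∈ Finset.Ico (k+1) K, (1 - lam * γ l)
        ≤ ∑ k ∈ Finset.range K', γ k := Finset.sum_le_sum (fun k _ => hterm k)
      _ ≤ ∑ k ∈ Finset.range (m+1), γ k :=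
          Finset.sum_le_sum_of_subset_of_nonneg (Finset.range_subset_range.mpr hK')
            (fun i _ _ => (hγpos i).le)
  by_cases hKm : K ≤ m + 1
  · linarith [hpart1 K hKm, hC'pos]
  · push_neg at hKm
    have hKm' : m + 1 ≤ K := hKm.le
    have hK1r : (0:ℝ) < (K:ℝ) - 1 := by
      have : (2:ℕ) ≤ K := by omega
      have : (2:ℝ) ≤ (K:ℝ) := by exact_mod_cast this
      linarith
    -- bound each term with index k > m
    have hterm2 : ∀ k ∈ Finset.Ico (m+1) K,
        γ k * (∏ l ∈ Finset.Ico (k+1) K, (1 - lam * γ l)) ≤ C' / ((K:ℝ)-1) := by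
      intro k hk
      obtain ⟨hk1, hk2⟩ := Finset.mem_Ico.mp hk
      have hγk : γ k = C' / (k:ℝ) := hprop k (by omega)
      have hk1' : 1 ≤ k := by omega
      have hkpos : (0:ℝ) < (k:ℝ) := by exact_mod_cast Nat.lt_of_lt_of_le Nat.zero_lt_one hk1'
      have hprodle : (∏ l ∈ Finset.Ico (k+1) K, (1 - lam * γ l))
          ≤ ∏ l ∈ Finset.Ico (k+1) K, (((l:ℝ)-1)/(l:ℝ)) := by
        apply Finset.prod_le_prod (fun l _ => hfac0 l)
        intro l hl
        obtain ⟨hl1, hl2⟩ := Finset.mem_Ico.mp hl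
        have hγl : γ l = C' / (l:ℝ) := hprop l (by omega)
        have hlpos : (0:ℝ) < (l:ℝ) := by
          have : 1 ≤ l := by omega
          exact_mod_cast Nat.lt_of_lt_of_le Nat.zero_lt_one this
        have h1l : 1/(l:ℝ) ≤ lam * γ l := by
          rw [hγl, ← mul_div_assoc]
          exact div_le_div_of_nonneg_right hlamC' hlpos.le
        have : ((l:ℝ)-1)/(l:ℝ) = 1 - 1/(l:ℝ) := by
          rw [sub_div, div_self hlpos.ne']
        rw [this]
        linarith
      have htel : (∏ l ∈ Finset.Ico (k+1) K, (((l:ℝ)-1)/(l:ℝ))) = (k:ℝ)/((K:ℝ)-1) :=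
        telescope_prod k hk1' K hk2
      calc γ k * (∏ l ∈ Finset.Ico (k+1) K, (1 - lam * γ l))
          ≤ γ k * ((k:ℝ)/((K:ℝ)-1)) := by
            apply mul_le_mul_of_nonneg_left (hprodle.trans htel.le) (hγpos k).le
        _ = (C'/(k:ℝ)) * ((k:ℝ)/((K:ℝ)-1)) := by rw [hγk]
        _ = ((k:ℝ) * C') / ((k:ℝ) * ((K:ℝ)-1)) := by
            rw [div_mul_div_comm, mul_comm C' (k:ℝ)]
        _ = C' / ((K:ℝ)-1) := mul_div_mul_left _ _ hkpos.ne'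
    -- assemble
    rw [← Finset.sum_range_add_sum_Ico (fun k => γ k * ∏ l ∈ Finset.Ico (k+1) K, (1 - lam * γ l)) hKm']
    have hpart2 : ∑ k ∈ Finset.Ico (m+1) K, γ k * ∏ l ∈ Finset.Ico (k+1) K, (1 - lam * γ l)
        ≤ C' := by
      calc ∑ k ∈ Finset.Ico (m+1) K, γ k * ∏ l ∈ Finset.Ico (k+1) K, (1 - lam * γ l)
          ≤ (Finset.Ico (m+1) K).card • (C' / ((K:ℝ)-1)) :=
            Finset.sum_le_card_nsmul _ _ _ hterm2
        _ = ((K - (m+1) : ℕ):ℝ) * (C' / ((K:ℝ)-1)) := by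
            rw [Nat.card_Ico, nsmul_eq_mul]
        _ ≤ ((K:ℝ)-1) * (C' / ((K:ℝ)-1)) := by
            apply mul_le_mul_of_nonneg_right _ (div_nonneg hC'pos.le hK1r.le)
            have h1 : ((K - (m+1) : ℕ):ℝ) = (K:ℝ) - ((m:ℝ)+1) := by
              push_cast [Nat.cast_sub hKm']; ring
            rw [h1]
            have : (1:ℝ) ≤ (m:ℝ) := by exact_mod_cast hm1
            linarith
        _ = C' := by rw [mul_comm, div_mul_cancel₀ _ hK1r.ne']
    linarith [hpart1 (m+1) (le_refl _), hpart2]
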